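/- Under the same setting, if x ∈ [n]_A and d_B ∈ [n]_B are both (ε,δ)-good, then the L¹ distance between their weighted edge-density vectors is at least -(1-δ) + τ(q₀ - q₁ - 2ε) - k/(nδ) - (1-τ). -/

import Mathlib

open Finset

/-- Edge density of a vertex `x` with respect to a vertex set `S`. -/
noncomputable def eDen {n : ℕ} (M : Fin n → Fin n → ℝ) (x : Fin n)
    (S : Finset (Fin n)) : ℝ := (∑ j ∈ S, M x j) / S.card

lemma habs01 {a b : ℝ} (ha : a = 0 ∨ a = 1) (hb : b = 0 ∨ b = 1) : |a - b| ≤ 1 := by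
  rw [abs_le]
  rcases ha with h|h <;> rcases hb with h'|h' <;> subst h <;> subst h' <;> norm_num

/-- Cross-block bound: if `x ∈ A` and `d_B ∈ B` are both (ε,δ)-good vertices,
the L¹ distance between their weighted edge-density vectors is at least
-(1-δ) + τ(q₀ - q₁ - 2ε) - k/(nδ) - (1-τ). -/
theorem stmt_11 (n k : ℕ) (hn : 0 < n) (hk : 0 < k)
    (G Gd : Fin n → Fin n → ℝ)
    (hG01 : ∀ i j, G i j = 0 ∨ G i j = 1) (hGd01 : ∀ i j, Gd i j = 0 ∨ Gd i j = 1)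
    (hdiag : ∀ i j, i ≠ j → Gd i j = G i j)
    (A : Finset (Fin n))
    (q0 q1 τ δ ε : ℝ)
    (hq : 0 ≤ q1 ∧ q1 < q0 ∧ q0 ≤ 1)
    (hτ : 0 < τ ∧ τ ≤ 1) (hδ : 0 < δ ∧ δ ≤ 1) (hε : 0 < ε)
    (C Cstar : Fin k → Finset (Fin n))
    (hsub : ∀ i, Cstar i ⊆ C i)
    (hdisj : Pairwise (Function.onFun Disjoint C))
    (hcover : ∀ v : Fin n, ∃ i, v ∈ C i)
    -- every class is δ-large and δ-good
    (hlarge : ∀ i, δ * n / k ≤ ((C i).card : ℝ))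
    (hgood : ∀ i, δ * (C i).card ≤ ((Cstar i).card : ℝ))
    -- the majority of each class lies entirely in one block
    (hmaj : ∀ i, Cstar i ⊆ A ∨ Cstar i ⊆ Aᶜ)
    -- at least τn vertices are correctly classified
    (hcorrect : τ * n ≤ ∑ i, ((Cstar i).card : ℝ))
    (x dB : Fin n) (hx : x ∈ A) (hdB : dB ∈ Aᶜ)
    -- x and dA are (ε,δ)-good: densities (in the augmented graph Gd) to each
    -- majority set are within ε of the expected value
    (hxgood : ∀ i, (Cstar i ⊆ A → |eDen Gd x (Cstar i) - q0| < ε) ∧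
        (Cstar i ⊆ Aᶜ → |eDen Gd x (Cstar i) - q1| < ε))
    (hdBgood : ∀ i, (Cstar i ⊆ A → |eDen Gd dB (Cstar i) - q1| < ε) ∧
        (Cstar i ⊆ Aᶜ → |eDen Gd dB (Cstar i) - q0| < ε)) :
    ∑ i, (((C i).card : ℝ) / n) * |eDen G x (C i) - eDen G dB (C i)|
      ≥ -(1 - δ) + τ * (q0 - q1 - 2 * ε) - k / (n * δ) - (1 - τ) := by
  obtain ⟨hq1, hq01, hq0⟩ := hq
  obtain ⟨hτ0, hτ1⟩ := hτ
  obtain ⟨hδ0, hδ1⟩ := hδ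
  have hn' : (0:ℝ) < n := by exact_mod_cast hn
  have hk' : (0:ℝ) < k := by exact_mod_cast hk
  have hdB' : dB ∉ A := mem_compl.mp hdB
  have hxdB : x ≠ dB := by rintro rfl; exact hdB' hx
  have hCpos : ∀ i, (0:ℝ) < ((C i).card : ℝ) := fun i =>
    lt_of_lt_of_le (div_pos (mul_pos hδ0 hn') hk') (hlarge i)
  have hSpos : ∀ i, (0:ℝ) < ((Cstar i).card : ℝ) := fun i =>
    lt_of_lt_of_le (mul_pos hδ0 (hCpos i)) (hgood i)
  have hLnn : 0 ≤ ∑ i, (((C i).card : ℝ) / n) * |eDen G x (C i) - eDen G dB (C i)| :=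
    Finset.sum_nonneg fun i _ => mul_nonneg (by positivity) (abs_nonneg _)
  have hkd : 0 ≤ (k:ℝ) / (n*δ) := by positivity
  rcases le_or_gt (q0 - q1 - 2*ε) 0 with hc | hc
  · have : τ * (q0 - q1 - 2*ε) ≤ 0 := mul_nonpos_of_nonneg_of_nonpos hτ0.le hc
    linarith
  -- main case
  set c : ℝ := q0 - q1 - 2*ε with hcdef
  -- per-class key bound
  have key : ∀ i, c * ((Cstar i).card:ℝ) - (((C i).card:ℝ) - ((Cstar i).card:ℝ))
      - ((if x ∈ Cstar i then (1:ℝ) else 0) + (if dB ∈ Cstar i then (1:ℝ) else 0))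
      ≤ |∑ j ∈ C i, (G x j - G dB j)| := by
    intro i
    have hST : Cstar i ⊆ C i := hsub i
    have hm : (0:ℝ) < ((Cstar i).card:ℝ) := hSpos i
    -- star bound with Gd
    have hstar : c * ((Cstar i).card:ℝ) ≤ |∑ j ∈ Cstar i, (Gd x j - Gd dB j)| := by
      have hsum : ∑ j ∈ Cstar i, (Gd x j - Gd dB j)
          = (eDen Gd x (Cstar i) - eDen Gd dB (Cstar i)) * ((Cstar i).card:ℝ) := by
        rw [Finset.sum_sub_distrib, eDen, eDen, sub_mul,
          div_mul_cancel₀ _ hm.ne', div_mul_cancel₀ _ hm.ne']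
      have hden : c ≤ |eDen Gd x (Cstar i) - eDen Gd dB (Cstar i)| := by
        rcases hmaj i with hA | hAc
        · have h1 := abs_lt.mp ((hxgood i).1 hA)
          have h2 := abs_lt.mp ((hdBgood i).1 hA)
          refine le_trans ?_ (le_abs_self _)
          simp only [hcdef]; linarith
        · have h1 := abs_lt.mp ((hxgood i).2 hAc)
          have h2 := abs_lt.mp ((hdBgood i).2 hAc)
          rw [abs_sub_comm]
          refine le_trans ?_ (le_abs_self _)
          simp only [hcdef]; linarith
      rw [hsum, abs_mul, abs_of_pos hm]
      exact mul_le_mul_of_nonneg_right hden hm.le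
    -- middle: G vs Gd on Cstar differs only at diagonal entries of x and dB
    have hmid : |∑ j ∈ Cstar i, ((G x j - G dB j) - (Gd x j - Gd dB j))|
        ≤ (if x ∈ Cstar i then (1:ℝ) else 0) + (if dB ∈ Cstar i then (1:ℝ) else 0) := by
      calc |∑ j ∈ Cstar i, ((G x j - G dB j) - (Gd x j - Gd dB j))|
          ≤ ∑ j ∈ Cstar i, |(G x j - G dB j) - (Gd x j - Gd dB j)| :=
            Finset.abs_sum_le_sum_abs _ _
        _ ≤ ∑ j ∈ Cstar i, ((if j = x then (1:ℝ) else 0) + (if j = dB then (1:ℝ) else 0)) := by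
            refine Finset.sum_le_sum fun j hj => ?_
            by_cases hjx : j = x
            · subst hjx
              have hne : dB ≠ j := fun h => hxdB h.symm
              have hne2 : j ≠ dB := fun h => hxdB h
              have heq : (G j j - G dB j) - (Gd j j - Gd dB j) = G j j - Gd j j := by
                rw [hdiag dB j hne]; ring
              rw [heq]
              simp only [if_pos rfl, if_neg hne2, add_zero]
              exact habs01 (hG01 j j) (hGd01 j j)
            · by_cases hjd : j = dB
              · subst hjd
                have hne : x ≠ j := fun h => hxdB h
                have heq : (G x j - G j j) - (Gd x j - Gd j j) = Gd j j - G j j := by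
                  rw [hdiag x j hne]; ring
                rw [heq]
                simp only [if_neg hjx, if_pos rfl, zero_add]
                exact habs01 (hGd01 j j) (hG01 j j)
              · have e1 : Gd x j = G x j := hdiag x j (fun h => hjx h.symm)
                have e2 : Gd dB j = G dB j := hdiag dB j (fun h => hjd h.symm)
                simp [e1, e2, if_neg hjx, if_neg hjd]
        _ = (if x ∈ Cstar i then (1:ℝ) else 0) + (if dB ∈ Cstar i then (1:ℝ) else 0) := by
            rw [Finset.sum_add_distrib, Finset.sum_ite_eq' (Cstar i) x (fun _ => (1:ℝ)),
              Finset.sum_ite_eq' (Cstar i) dB (fun _ => (1:ℝ))]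
    -- rest: leftover part
    have hrest : |∑ j ∈ C i \ Cstar i, (G x j - G dB j)|
        ≤ ((C i).card:ℝ) - ((Cstar i).card:ℝ) := by
      calc |∑ j ∈ C i \ Cstar i, (G x j - G dB j)|
          ≤ ∑ j ∈ C i \ Cstar i, |G x j - G dB j| := Finset.abs_sum_le_sum_abs _ _
        _ ≤ ∑ _j ∈ C i \ Cstar i, (1:ℝ) := by
            refine Finset.sum_le_sum fun j hj => ?_
            rcases hG01 x j with h|h <;> rcases hG01 dB j with h'|h' <;>
              rw [h, h'] <;> norm_num
        _ = (((C i \ Cstar i).card):ℝ) := by rw [Finset.sum_const]; simp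
        _ = ((C i).card:ℝ) - ((Cstar i).card:ℝ) := by
            rw [Finset.card_sdiff_of_subset hST, Nat.cast_sub (Finset.card_le_card hST)]
    -- combine
    have hdecomp : ∑ j ∈ C i, (G x j - G dB j)
        = ∑ j ∈ C i \ Cstar i, (G x j - G dB j) + ∑ j ∈ Cstar i, (G x j - G dB j) :=
      (Finset.sum_sdiff hST).symm
    have hmid' : ∑ j ∈ Cstar i, ((G x j - G dB j) - (Gd x j - Gd dB j))
        = ∑ j ∈ Cstar i, (G x j - G dB j) - ∑ j ∈ Cstar i, (Gd x j - Gd dB j) :=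
      Finset.sum_sub_distrib _ _
    set A1 := ∑ j ∈ Cstar i, (Gd x j - Gd dB j)
    set A2 := ∑ j ∈ Cstar i, ((G x j - G dB j) - (Gd x j - Gd dB j))
    set A3 := ∑ j ∈ C i \ Cstar i, (G x j - G dB j)
    set AA := ∑ j ∈ C i, (G x j - G dB j)
    have hA1 : A1 = AA - (A2 + A3) := by
      rw [hmid'] at *
      rw [hdecomp]; ring
    have h5 : |A1| ≤ |AA| + (|A2| + |A3|) := by
      calc |A1| = |AA + -(A2 + A3)| := by rw [hA1]; ring_nf
        _ ≤ |AA| + |-(A2 + A3)| := abs_add_le _ _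
        _ = |AA| + |A2 + A3| := by rw [abs_neg]
        _ ≤ |AA| + (|A2| + |A3|) := add_le_add_right (abs_add_le _ _) _
    linarith
  -- rewrite each term
  have hterm : ∀ i, (((C i).card : ℝ) / n) * |eDen G x (C i) - eDen G dB (C i)|
      = |∑ j ∈ C i, (G x j - G dB j)| / n := by
    intro i
    have h0 := (hCpos i).ne'
    rw [eDen, eDen, div_sub_div_same, ← Finset.sum_sub_distrib, abs_div, Nat.abs_cast]
    field_simp
  -- E bound
  have hE : ∑ i, ((if x ∈ Cstar i then (1:ℝ) else 0) + (if dB ∈ Cstar i then (1:ℝ) else 0))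
      ≤ (k:ℝ) := by
    have hP : ∑ i, (if x ∈ Cstar i then (1:ℝ) else 0)
        = ((Finset.univ.filter (fun i => x ∈ Cstar i)).card : ℝ) := by
      rw [Finset.sum_boole]
    have hQ : ∑ i, (if dB ∈ Cstar i then (1:ℝ) else 0)
        = ((Finset.univ.filter (fun i => dB ∈ Cstar i)).card : ℝ) := by
      rw [Finset.sum_boole]
    have hdisjPQ : Disjoint (Finset.univ.filter (fun i => x ∈ Cstar i))
        (Finset.univ.filter (fun i => dB ∈ Cstar i)) := by
      rw [Finset.disjoint_left]
      intro i hi hi'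
      have hxi : x ∈ Cstar i := (Finset.mem_filter.mp hi).2
      have hdi : dB ∈ Cstar i := (Finset.mem_filter.mp hi').2
      rcases hmaj i with hA | hAc
      · exact hdB' (hA hdi)
      · exact (mem_compl.mp (hAc hxi)) hx
    have hcard : (Finset.univ.filter (fun i => x ∈ Cstar i)).card
        + (Finset.univ.filter (fun i => dB ∈ Cstar i)).card ≤ k := by
      rw [← Finset.card_union_of_disjoint hdisjPQ]
      calc _ ≤ (Finset.univ : Finset (Fin k)).card := Finset.card_le_univ _
        _ = k := by simp
    rw [Finset.sum_add_distrib, hP, hQ]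
    exact_mod_cast hcard
  -- sum of class cards ≤ n
  have hTle : ∑ i, (((C i).card):ℝ) ≤ (n:ℝ) := by
    have h1 : ∑ i, (C i).card ≤ n := by
      rw [← Finset.card_biUnion (fun a _ b _ hab => hdisj hab)]
      calc _ ≤ (Finset.univ : Finset (Fin n)).card := Finset.card_le_univ _
        _ = n := by simp
    calc ∑ i, (((C i).card):ℝ) = ((∑ i, (C i).card : ℕ) : ℝ) := by push_cast; ring
      _ ≤ (n:ℝ) := by exact_mod_cast h1
  -- assemble
  have hsum : (∑ i, (c * ((Cstar i).card:ℝ) - (((C i).card:ℝ) - ((Cstar i).card:ℝ))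
      - ((if x ∈ Cstar i then (1:ℝ) else 0) + (if dB ∈ Cstar i then (1:ℝ) else 0)))) / n
      ≤ ∑ i, (((C i).card : ℝ) / n) * |eDen G x (C i) - eDen G dB (C i)| := by
    rw [Finset.sum_congr rfl (fun i _ => hterm i), ← Finset.sum_div]
    gcongr with i
    exact key i
  have hexp : ∑ i, (c * ((Cstar i).card:ℝ) - (((C i).card:ℝ) - ((Cstar i).card:ℝ))
      - ((if x ∈ Cstar i then (1:ℝ) else 0) + (if dB ∈ Cstar i then (1:ℝ) else 0)))
      = c * (∑ i, ((Cstar i).card:ℝ)) - ((∑ i, ((C i).card:ℝ)) - ∑ i, ((Cstar i).card:ℝ))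
      - ∑ i, ((if x ∈ Cstar i then (1:ℝ) else 0) + (if dB ∈ Cstar i then (1:ℝ) else 0)) := by
    rw [Finset.sum_sub_distrib, Finset.sum_sub_distrib, Finset.sum_sub_distrib,
      Finset.mul_sum]
  rw [ge_iff_le]
  refine le_trans ?_ hsum
  rw [hexp, le_div_iff₀ hn']
  have h1 : c * (τ * n) ≤ c * ∑ i, ((Cstar i).card:ℝ) :=
    mul_le_mul_of_nonneg_left hcorrect hc.le
  have h2 : (k:ℝ) ≤ (k:ℝ) / δ := by rw [le_div_iff₀ hδ0]; nlinarith
  have h3 : ((k:ℝ) / (n * δ)) * n = (k:ℝ) / δ := by field_simp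
  have h4 : δ * n ≤ n := by nlinarith
  nlinarith [hE, hTle, hcorrect, h1, h2, h3, h4]
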